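/- Let T : J → J be a bounded linear operator on James space with sup_i ‖T(e_i) − e_i‖ < 1. Then the identity on J factors through T, i.e. there exist bounded operators A, B : J → J with I = B ∘ T ∘ A. -/

import Mathlib

open Filter Topology NormedSpace

/-- Spreading property for finitely supported coefficient functions. -/
lemma spread_finsupp {J : Type*} [NormedAddCommGroup J] [NormedSpace ℝ J]
    (e : ℕ → J)
    (hspread : ∀ (n : ℕ) (a : Fin n → ℝ) (k : Fin n → ℕ), StrictMono k →
      ‖∑ i, a i • e (k i)‖ = ‖∑ i, a i • e i.val‖)
    (k : ℕ → ℕ) (hk : StrictMono k) (c : ℕ →₀ ℝ) :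
    ‖∑ i ∈ c.support, c i • e (k i)‖ = ‖∑ i ∈ c.support, c i • e i‖ := by
  classical
  set s := c.support with hs
  have key : ∀ (g : ℕ → ℕ), StrictMono g →
      ‖∑ i ∈ s, c i • e (g i)‖ =
        ‖∑ j : Fin s.card, c (s.orderIsoOfFin rfl j) • e j.val‖ := by
    intro g hg
    set σ := s.orderIsoOfFin rfl with hσ
    have hmono : StrictMono fun j : Fin s.card => g ((σ j : s) : ℕ) :=
      hg.comp (fun a b h => Subtype.coe_lt_coe.mpr (σ.strictMono h))
    have h1 : ∑ i ∈ s, c i • e (g i) = ∑ j : Fin s.card, c (σ j) • e (g (σ j)) := by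
      rw [← Finset.sum_coe_sort s (fun i => c i • e (g i))]
      exact (Equiv.sum_comp σ.toEquiv (fun i : s => c (i : ℕ) • e (g (i : ℕ)))).symm
    rw [h1]
    exact hspread s.card (fun j => c (σ j)) (fun j => g (σ j)) hmono
  rw [key k hk]; exact (key id strictMono_id).symm

set_option maxHeartbeats 2000000 in
theorem stmt_5 {J : Type*} [NormedAddCommGroup J] [NormedSpace ℝ J] [CompleteSpace J]
    (e : ℕ → J) (estar : ℕ → J →L[ℝ] ℝ)
    (hbi : ∀ i j, estar i (e j) = if i = j then 1 else 0)
    (hdense : (Submodule.span ℝ (Set.range e)).topologicalClosure = ⊤)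
    (hspread : ∀ (n : ℕ) (a : Fin n → ℝ) (k : Fin n → ℕ), StrictMono k →
      ‖∑ i, a i • e (k i)‖ = ‖∑ i, a i • e i.val‖)
    (ess : StrongDual ℝ (StrongDual ℝ J))
    (hwlim : ∀ f : StrongDual ℝ J, Tendsto (fun i => f (e i)) atTop (𝓝 (ess f)))
    (hdist : ∀ x : J, (1 : ℝ) ≤ ‖ess - inclusionInDoubleDual ℝ J x‖)
    (hquasi : ∀ F : StrongDual ℝ (StrongDual ℝ J), ∃ (c : ℝ) (x : J),
      F = c • ess + inclusionInDoubleDual ℝ J x)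
    (hsub : ∀ x : ℕ → J, (∃ M : ℝ, ∀ i, ‖x i‖ ≤ M) →
      ∀ F : StrongDual ℝ (StrongDual ℝ J),
        (∀ f : StrongDual ℝ J, Tendsto (fun i => f (x i)) atTop (𝓝 (F f))) →
        (∀ z : J, inclusionInDoubleDual ℝ J z ≠ F) →
        ∃ k : ℕ → ℕ, StrictMono k ∧
          (∃ C > (0 : ℝ), ∀ c : ℕ →₀ ℝ,
            (1 / C) * ‖∑ i ∈ c.support, c i • e i‖ ≤ ‖∑ i ∈ c.support, c i • x (k i)‖ ∧
            ‖∑ i ∈ c.support, c i • x (k i)‖ ≤ C * ‖∑ i ∈ c.support, c i • e i‖) ∧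
          ∃ P : J →L[ℝ] J, P.comp P = P ∧
            LinearMap.range (P : J →ₗ[ℝ] J) =
              (Submodule.span ℝ (Set.range fun i => x (k i))).topologicalClosure)
    (T : J →L[ℝ] J) (hT : ∃ c < (1 : ℝ), ∀ i, ‖T (e i) - e i‖ ≤ c) :
    ∃ A B : J →L[ℝ] J, B.comp (T.comp A) = ContinuousLinearMap.id ℝ J := by
  classical
  obtain ⟨c₀, hc₀lt, hTc⟩ := hT
  -- the basis is linearly independent
  have hli_e : LinearIndependent ℝ e := by
    rw [linearIndependent_iff]
    intro l hl
    ext j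
    have h1 := congrArg (estar j) hl
    simp only [Finsupp.linearCombination_apply, Finsupp.sum, map_sum, map_smul, map_zero,
      smul_eq_mul, hbi, mul_ite, mul_one, mul_zero, Finset.sum_ite_eq] at h1
    by_cases hj : j ∈ l.support
    · simpa [hj] using h1
    · simpa using Finsupp.notMem_support_iff.mp hj
  -- the norm of each basis vector equals ‖e 0‖
  have hnorm_e : ∀ i, ‖e i‖ = ‖e 0‖ := by
    intro i
    have := hspread 1 (fun _ => 1) (fun _ => i) (Subsingleton.strictMono _)
    simpa using this
  -- the w*-limit functional of (T (e i))
  set F : StrongDual ℝ (StrongDual ℝ J) := ess.comp ((ContinuousLinearMap.compL ℝ J J ℝ).flip T) with hF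
  have hFapp : ∀ f : StrongDual ℝ J, F f = ess (f.comp T) := fun f => rfl
  have hwlimF : ∀ f : StrongDual ℝ J, Tendsto (fun i => f (T (e i))) atTop (𝓝 (F f)) := by
    intro f
    simpa [hFapp] using hwlim (f.comp T)
  have hc₀0 : (0:ℝ) ≤ c₀ := le_trans (norm_nonneg _) (hTc 0)
  -- ‖ess - F‖ ≤ c₀
  have hessF : ‖ess - F‖ ≤ c₀ := by
    apply ContinuousLinearMap.opNorm_le_bound _ hc₀0
    intro f
    have h1 : (ess - F) f = ess (f - f.comp T) := by
      simp [hFapp, map_sub]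
    rw [h1]
    have h2 : Tendsto (fun i => (f - f.comp T) (e i)) atTop (𝓝 (ess (f - f.comp T))) :=
      hwlim _
    have h3 : ∀ i, ‖(f - f.comp T) (e i)‖ ≤ c₀ * ‖f‖ := by
      intro i
      have : (f - f.comp T) (e i) = f (e i - T (e i)) := by simp [map_sub]
      rw [this]
      calc ‖f (e i - T (e i))‖ ≤ ‖f‖ * ‖e i - T (e i)‖ := f.le_opNorm _
        _ ≤ ‖f‖ * c₀ := by
            have := hTc i
            rw [← norm_neg] at this
            simp only [neg_sub] at this
            exact mul_le_mul_of_nonneg_left this (norm_nonneg f)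
        _ = c₀ * ‖f‖ := mul_comm _ _
    exact le_of_tendsto' h2.norm (fun i => h3 i)
  -- F is not in J
  have hnotin : ∀ z : J, inclusionInDoubleDual ℝ J z ≠ F := by
    intro z hz
    have h1 : (1:ℝ) ≤ ‖ess - F‖ := by
      have := hdist z
      rwa [hz] at this
    linarith [le_trans h1 hessF]
  -- boundedness of (T (e i))
  have hbdd : ∃ M : ℝ, ∀ i, ‖T (e i)‖ ≤ M := by
    refine ⟨‖T‖ * ‖e 0‖, fun i => ?_⟩
    calc ‖T (e i)‖ ≤ ‖T‖ * ‖e i‖ := T.le_opNorm _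
      _ = ‖T‖ * ‖e 0‖ := by rw [hnorm_e i]
  obtain ⟨k, hk, ⟨C, hC0, hC⟩, P, hPP, hPrange⟩ :=
    hsub (fun i => T (e i)) hbdd F hwlimF hnotin
  -- linear independence of the subsequence images
  have hli_xk : LinearIndependent ℝ (fun i => T (e (k i))) := by
    rw [linearIndependent_iff]
    intro l hl
    have h0 : ∑ i ∈ l.support, l i • T (e (k i)) = 0 := by
      simpa [Finsupp.linearCombination_apply, Finsupp.sum] using hl
    have h1 := (hC l).1
    rw [h0, norm_zero] at h1
    have hCpos : (0:ℝ) < 1 / C := one_div_pos.mpr hC0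
    have h2 : ‖∑ i ∈ l.support, l i • e i‖ ≤ 0 := by
      nlinarith [norm_nonneg (∑ i ∈ l.support, l i • e i)]
    have h3 : ∑ i ∈ l.support, l i • e i = 0 := norm_le_zero_iff.mp h2
    exact linearIndependent_iff.mp hli_e l
      (by simpa [Finsupp.linearCombination_apply, Finsupp.sum] using h3)
  -- the dense span of the basis
  set p : Submodule ℝ J := Submodule.span ℝ (Set.range e) with hp
  have hpdense : Dense (p : Set J) := Submodule.dense_iff_topologicalClosure_eq_top.mpr hdense
  let b : Module.Basis ℕ ℝ p := Module.Basis.span hli_e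
  have hval : ∀ y : p, (y : J) = ∑ i ∈ (b.repr y).support, (b.repr y) i • e i := by
    intro y
    conv_lhs => rw [← b.linearCombination_repr y]
    rw [Finsupp.linearCombination_apply, Finsupp.sum, AddSubmonoidClass.coe_finset_sum]
    exact Finset.sum_congr rfl fun i _ => by rw [SetLike.val_smul, Module.Basis.span_apply]
  -- the operator A
  let A₀ : p →ₗ[ℝ] J := b.constr ℝ (fun i => e (k i))
  have hA₀ : ∀ y : p, ‖A₀ y‖ = ‖(y : J)‖ := by
    intro y
    have h1 : A₀ y = ∑ i ∈ (b.repr y).support, (b.repr y) i • e (k i) := by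
      rw [Module.Basis.constr_apply]; rfl
    rw [h1, hval y, spread_finsupp e hspread k hk]
  let A₁ : p →L[ℝ] J := A₀.mkContinuous 1 (fun y => by rw [hA₀ y, one_mul]; exact le_rfl)
  have hdr : DenseRange p.subtypeL := hpdense.denseRange_val
  have hui : IsUniformInducing p.subtypeL := isUniformEmbedding_subtype_val.isUniformInducing
  let A : J →L[ℝ] J := A₁.extend p.subtypeL
  have hAe : ∀ i, A (e i) = e (k i) := by
    intro i
    have hm : e i ∈ p := Submodule.subset_span ⟨i, rfl⟩
    have h1 : A (p.subtypeL ⟨e i, hm⟩) = A₁ ⟨e i, hm⟩ :=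
      ContinuousLinearMap.extend_eq _ hdr hui _
    have h2 : (⟨e i, hm⟩ : p) = b i := Subtype.ext (Module.Basis.coe_span_apply hli_e i).symm
    calc A (e i) = A₁ ⟨e i, hm⟩ := h1
      _ = A₀ ⟨e i, hm⟩ := rfl
      _ = A₀ (b i) := by rw [h2]
      _ = e (k i) := b.constr_basis ℝ (fun i => e (k i)) i
  -- the span of the subsequence images and its closure
  set p' : Submodule ℝ J := Submodule.span ℝ (Set.range fun i => T (e (k i))) with hp'
  set Q : Submodule ℝ J := p'.topologicalClosure with hQ
  have hle : p' ≤ Q := p'.le_topologicalClosure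
  let ι : p' →L[ℝ] Q := p'.subtypeL.codRestrict Q (fun y => hle y.2)
  have hiso : Isometry ι := AddMonoidHomClass.isometry_of_norm ι (fun y => rfl)
  have hui' : IsUniformInducing ι := hiso.isUniformInducing
  have hdr' : DenseRange ι := by
    intro q
    rw [closure_subtype]
    have himg : Subtype.val '' Set.range ι = (p' : Set J) := by
      ext z
      constructor
      · rintro ⟨w, ⟨y, rfl⟩, rfl⟩
        exact y.2
      · intro hz
        exact ⟨ι ⟨z, hz⟩, ⟨⟨z, hz⟩, rfl⟩, rfl⟩
    rw [himg]
    show (q : J) ∈ closure (p' : Set J)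
    rw [← Submodule.topologicalClosure_coe]
    exact q.2
  -- the operator B
  let b' : Module.Basis ℕ ℝ p' := Module.Basis.span hli_xk
  have hval' : ∀ y : p',
      (y : J) = ∑ i ∈ (b'.repr y).support, (b'.repr y) i • T (e (k i)) := by
    intro y
    conv_lhs => rw [← b'.linearCombination_repr y]
    rw [Finsupp.linearCombination_apply, Finsupp.sum, AddSubmonoidClass.coe_finset_sum]
    exact Finset.sum_congr rfl fun i _ => by rw [SetLike.val_smul, Module.Basis.span_apply]
  let B₀ : p' →ₗ[ℝ] J := b'.constr ℝ e
  have hB₀ : ∀ y : p', ‖B₀ y‖ ≤ C * ‖y‖ := by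
    intro y
    have h1 : B₀ y = ∑ i ∈ (b'.repr y).support, (b'.repr y) i • e i := by
      rw [Module.Basis.constr_apply]; rfl
    have h2 := (hC (b'.repr y)).1
    have hy : ‖(y : J)‖ = ‖∑ i ∈ (b'.repr y).support, (b'.repr y) i • T (e (k i))‖ := by
      rw [← hval' y]
    rw [h1]
    have hCne : C ≠ 0 := ne_of_gt hC0
    calc ‖∑ i ∈ (b'.repr y).support, (b'.repr y) i • e i‖
        = C * ((1 / C) * ‖∑ i ∈ (b'.repr y).support, (b'.repr y) i • e i‖) := by
          field_simp
      _ ≤ C * ‖∑ i ∈ (b'.repr y).support, (b'.repr y) i • T (e (k i))‖ :=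
          mul_le_mul_of_nonneg_left h2 hC0.le
      _ = C * ‖y‖ := by rw [← hy, Submodule.norm_coe]
  let B₁ : p' →L[ℝ] J := B₀.mkContinuous C hB₀
  let B₂ : Q →L[ℝ] J := B₁.extend ι
  have hPrange' : LinearMap.range (P : J →ₗ[ℝ] J) = Q := by
    rw [hQ, hp']
    exact hPrange
  have hPQ : ∀ z, P z ∈ Q := fun z => hPrange' ▸ LinearMap.mem_range_self _ z
  let Pc : J →L[ℝ] Q := P.codRestrict Q hPQ
  refine ⟨A, B₂.comp Pc, ?_⟩
  apply ContinuousLinearMap.ext_on (s := Set.range e) hpdense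
  rintro _ ⟨i, rfl⟩
  show B₂ (Pc (T (A (e i)))) = e i
  rw [hAe i]
  have hmem : T (e (k i)) ∈ p' := Submodule.subset_span ⟨i, rfl⟩
  have hfix : P (T (e (k i))) = T (e (k i)) := by
    have h1 : T (e (k i)) ∈ LinearMap.range (P : J →ₗ[ℝ] J) := by
      rw [hPrange']
      exact hle hmem
    obtain ⟨w, hw⟩ := h1
    have h2 : P (P w) = P w := by simpa using DFunLike.congr_fun hPP w
    rw [show P w = T (e (k i)) from hw] at h2
    exact h2
  have hPc : Pc (T (e (k i))) = ι ⟨T (e (k i)), hmem⟩ := by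
    apply Subtype.ext
    show P (T (e (k i))) = T (e (k i))
    exact hfix
  rw [hPc, ContinuousLinearMap.extend_eq _ hdr' hui']
  show B₀ ⟨T (e (k i)), hmem⟩ = e i
  have h2 : (⟨T (e (k i)), hmem⟩ : p') = b' i := Subtype.ext (Module.Basis.coe_span_apply hli_xk i).symm
  rw [h2]
  exact b'.constr_basis ℝ e i
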